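/- Let X be a 2-valued group (n = 2) such that inv(a) = a for every a ∈ X. Then for every x ∈ X and every natural number r ≥ 1, the growth function of the dynamic T_x satisfies ξ_x(r) = |Set(x^{*r})| ≤ r·(r+1). In particular every such dynamic has polynomial growth. -/

import Mathlib

/-- An `n`-valued group: multiplication takes values in `n`-element multisets. -/
structure NValuedGroup (n : ℕ) (X : Type*) where
  mul : X → X → Multiset X
  e : X
  inv : X → X
  one_le : 1 ≤ n
  card_mul : ∀ x y, (mul x y).card = n
  assoc : ∀ x y z, (mul x y).bind (fun t => mul t z) = (mul y z).bind (fun t => mul x t)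
  e_mul : ∀ x, mul e x = Multiset.replicate n x
  mul_e : ∀ x, mul x e = Multiset.replicate n x
  inv_mul : ∀ x, e ∈ mul (inv x) x
  mul_inv : ∀ x, e ∈ mul x (inv x)

variable {n : ℕ} {X : Type*}

/-- The multiset `x * s₁ * ⋯ * s_k` (iterated left-to-right, starting from `{x}`). -/
def NValuedGroup.wordProd (G : NValuedGroup n X) (x : X) (l : List X) : Multiset X :=
  l.foldl (fun m s => m.bind (fun t => G.mul t s)) {x}

/-- The ball `B_S(x, r)`: elements lying in `Set(x * s₁ * ⋯ * s_m)` for some `m ≤ r`,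
`s₁, …, s_m ∈ S`. -/
def NValuedGroup.ball (G : NValuedGroup n X) (S : Set X) (x : X) (r : ℕ) : Set X :=
  {y | ∃ l : List X, l.length ≤ r ∧ (∀ s ∈ l, s ∈ S) ∧ y ∈ G.wordProd x l}

/-- `S` generates `X`: every element lies in `Set(s₁ * ⋯ * s_m)` for some `m ≥ 1`,
`s₁, …, s_m ∈ S`. -/
def NValuedGroup.IsGenSet (G : NValuedGroup n X) (S : Set X) : Prop :=
  ∀ x : X, ∃ s₀ ∈ S, ∃ l : List X, (∀ s ∈ l, s ∈ S) ∧ x ∈ G.wordProd s₀ l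

/-- `G.spow x i` is the multivalued power `x^{*(i+1)}`; so `x^{*r} = G.spow x (r-1)` for `r ≥ 1`. -/
def NValuedGroup.spow (G : NValuedGroup n X) (x : X) : ℕ → Multiset X
  | 0 => {x}
  | r + 1 => (G.spow x r).bind (fun t => G.mul t x)

/-- `B*(x, r) = ⋃_{i=1}^{r} Set(x^{*i})`; in particular `B*(x, 0) = ∅`. -/
def NValuedGroup.Bstar (G : NValuedGroup n X) (x : X) (r : ℕ) : Set X :=
  {y | ∃ i < r, y ∈ G.spow x i}

/-- `S*(x, r) = B*(x, r) \ B*(x, r-1)`. -/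
def NValuedGroup.Sstar (G : NValuedGroup n X) (x : X) (r : ℕ) : Set X :=
  G.Bstar x r \ G.Bstar x (r - 1)

namespace NValuedGroup

lemma bind_replicate_two {X : Type*} (s : Multiset X) :
    s.bind (fun w => Multiset.replicate 2 w) = s + s := by
  induction s using Multiset.induction_on with
  | empty => simp
  | cons a s ih =>
    rw [Multiset.cons_bind, ih]
    have h2 : Multiset.replicate 2 a = ({a} : Multiset X) + {a} := rfl
    rw [h2, ← Multiset.singleton_add a s, add_add_add_comm]

section Aux

variable (G : NValuedGroup 2 X)

lemma e_mem_sq (hinv : ∀ a : X, G.inv a = a) (a : X) : G.e ∈ G.mul a a := by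
  have h := G.inv_mul a
  rwa [hinv] at h

lemma exists_phi (hinv : ∀ a : X, G.inv a = a) (a : X) :
    ∃ b, G.mul a a = G.e ::ₘ {b} := by
  obtain ⟨t, ht⟩ := Multiset.exists_cons_of_mem (G.e_mem_sq hinv a)
  have hc : Multiset.card t = 1 := by
    have h2 := G.card_mul a a
    rw [ht] at h2
    simpa using h2
  obtain ⟨b, rfl⟩ := Multiset.card_eq_one.mp hc
  exact ⟨b, ht⟩

open Classical in
/-- `phi a` is the element with `mul a a = {e, phi a}` (when it exists). -/
noncomputable def phi (a : X) : X :=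
  if h : ∃ b, G.mul a a = G.e ::ₘ {b} then h.choose else G.e

lemma phi_spec (hinv : ∀ a : X, G.inv a = a) (a : X) :
    G.mul a a = G.e ::ₘ {G.phi a} := by
  have h : ∃ b, G.mul a a = G.e ::ₘ {b} := G.exists_phi hinv a
  unfold phi
  rw [dif_pos h]
  exact h.choose_spec

/-- The chain of multipliers `u 0 = x`, `u (k+1) = phi (u k)`. -/
noncomputable def uchain (x : X) : ℕ → X
  | 0 => x
  | k + 1 => G.phi (uchain x k)

lemma ladder (hinv : ∀ a : X, G.inv a = a) (x : X) (a : X) (k : ℕ) :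
    (G.mul a (G.uchain x k)).bind (fun t => G.mul t (G.uchain x k)) =
      Multiset.replicate 2 a + G.mul a (G.uchain x (k + 1)) := by
  rw [G.assoc a (G.uchain x k) (G.uchain x k), G.phi_spec hinv (G.uchain x k)]
  rw [Multiset.cons_bind, Multiset.singleton_bind, G.mul_e]
  simp [uchain]

lemma mem_ladder (hinv : ∀ a : X, G.inv a = a) (x : X) {p w y : X} {k : ℕ}
    (hw : w ∈ G.mul p (G.uchain x k)) (hy : y ∈ G.mul w (G.uchain x k)) :
    y = p ∨ y ∈ G.mul p (G.uchain x (k + 1)) := by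
  have hmem : y ∈ (G.mul p (G.uchain x k)).bind (fun t => G.mul t (G.uchain x k)) :=
    Multiset.mem_bind.mpr ⟨w, hw, hy⟩
  rw [G.ladder hinv x] at hmem
  rcases Multiset.mem_add.mp hmem with h | h
  · exact Or.inl (Multiset.eq_of_mem_replicate h)
  · exact Or.inr h

lemma two_step (hinv : ∀ a : X, G.inv a = a) (x : X) (r : ℕ) :
    G.spow x (r + 2) = G.spow x r + G.spow x r +
      (G.spow x r).bind (fun w => G.mul w (G.uchain x 1)) := by
  have h1 : G.spow x (r + 2) = ((G.spow x r).bind (fun t => G.mul t x)).bind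
      (fun t => G.mul t x) := rfl
  rw [h1, Multiset.bind_assoc]
  have h2 : ∀ w : X, (G.mul w x).bind (fun t => G.mul t x) =
      Multiset.replicate 2 w + G.mul w (G.uchain x 1) := fun w => G.ladder hinv x w 0
  calc (G.spow x r).bind (fun w => (G.mul w x).bind (fun t => G.mul t x))
      = (G.spow x r).bind (fun w => Multiset.replicate 2 w + G.mul w (G.uchain x 1)) := by
        simp only [h2]
    _ = (G.spow x r).bind (fun w => Multiset.replicate 2 w) +
          (G.spow x r).bind (fun w => G.mul w (G.uchain x 1)) := Multiset.bind_add _ _ _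
    _ = G.spow x r + G.spow x r + (G.spow x r).bind (fun w => G.mul w (G.uchain x 1)) := by
        rw [bind_replicate_two]

lemma spow_one_card (x : X) : Multiset.card (G.spow x 1) = 2 := by
  have h : G.spow x 1 = G.mul x x := by
    show Multiset.bind {x} (fun t => G.mul t x) = G.mul x x
    simp [Multiset.singleton_bind]
  rw [h]
  exact G.card_mul x x

variable [DecidableEq X]

/-- `aset r` is the set of distinct elements of `x^{*r}` (and `∅` for `r = 0`). -/
noncomputable def aset (x : X) : ℕ → Finset X
  | 0 => ∅
  | r + 1 => (G.spow x r).toFinset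

lemma mem_aset_succ {x y : X} {r : ℕ} : y ∈ G.aset x (r + 1) ↔ y ∈ G.spow x r :=
  Multiset.mem_toFinset

lemma aset_mono2 (hinv : ∀ a : X, G.inv a = a) (x : X) :
    ∀ r : ℕ, G.aset x r ⊆ G.aset x (r + 2) := by
  intro r
  match r with
  | 0 => simp [aset]
  | r + 1 =>
    intro y hy
    rw [G.mem_aset_succ] at hy ⊢
    rw [G.two_step hinv x]
    exact Multiset.mem_add.mpr (Or.inl (Multiset.mem_add.mpr (Or.inl hy)))

lemma aset_monoEven (hinv : ∀ a : X, G.inv a = a) (x : X) (r m : ℕ) :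
    G.aset x r ⊆ G.aset x (r + 2 * m) := by
  induction m with
  | zero => simp
  | succ m ih =>
    have h : r + 2 * (m + 1) = (r + 2 * m) + 2 := by ring
    rw [h]
    exact ih.trans (G.aset_mono2 hinv x _)

lemma aset_fwd (hinv : ∀ a : X, G.inv a = a) (x : X) {w y : X} {r : ℕ}
    (hw : w ∈ G.aset x (r + 1)) (hy : y ∈ G.mul w (G.uchain x 1)) :
    y ∈ G.aset x (r + 3) := by
  rw [G.mem_aset_succ] at hw ⊢
  rw [G.two_step hinv x]
  exact Multiset.mem_add.mpr (Or.inr (Multiset.mem_bind.mpr ⟨w, hw, hy⟩))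

lemma aset_bwd (hinv : ∀ a : X, G.inv a = a) (x : X) {y : X} {r : ℕ}
    (hy : y ∈ G.aset x (r + 3)) :
    y ∈ G.aset x (r + 1) ∨ ∃ w ∈ G.aset x (r + 1), y ∈ G.mul w (G.uchain x 1) := by
  rw [mem_aset_succ, G.two_step hinv x] at hy
  rcases Multiset.mem_add.mp hy with h | h
  · rcases Multiset.mem_add.mp h with h' | h'
    · exact Or.inl (G.mem_aset_succ.mpr h')
    · exact Or.inl (G.mem_aset_succ.mpr h')
  · obtain ⟨w, hw, hyw⟩ := Multiset.mem_bind.mp h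
    exact Or.inr ⟨w, G.mem_aset_succ.mpr hw, hyw⟩

lemma inc (hinv : ∀ a : X, G.inv a = a) (x : X) :
    ∀ k, 1 ≤ k → ∀ r, 1 ≤ r → ∀ y, y ∈ G.aset x (r + 2 ^ k) →
    y ∉ G.aset x (r + 2 ^ k - 2) →
    ∃ w, (w ∈ G.aset x r ∧ w ∉ G.aset x (r - 2)) ∧ y ∈ G.mul w (G.uchain x k) := by
  intro k hk
  induction k, hk using Nat.le_induction with
  | base =>
    intro r hr y hy hyn
    obtain ⟨m, rfl⟩ : ∃ m, r = m + 1 := ⟨r - 1, by omega⟩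
    have hy' : y ∈ G.aset x (m + 3) := by
      have h : m + 1 + 2 ^ 1 = m + 3 := by norm_num
      rwa [h] at hy
    have hyn' : y ∉ G.aset x (m + 1) := by
      have h : m + 1 + 2 ^ 1 - 2 = m + 1 := by norm_num
      rwa [h] at hyn
    rcases G.aset_bwd hinv x hy' with h | ⟨w, hw, hyw⟩
    · exact absurd h hyn'
    · refine ⟨w, ⟨hw, ?_⟩, by simpa [uchain] using hyw⟩
      intro hwold
      apply hyn'
      rcases Nat.lt_or_ge m 2 with hm | hm
      · interval_cases m <;> exact absurd hwold (by simp [aset])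
      · obtain ⟨m', rfl⟩ : ∃ m', m = m' + 2 := ⟨m - 2, by omega⟩
        have hwold' : w ∈ G.aset x (m' + 1) := by
          have h : m' + 2 + 1 - 2 = m' + 1 := by omega
          rwa [h] at hwold
        exact G.aset_fwd hinv x hwold' hyw
  | succ k hk ih =>
    intro r hr y hy hyn
    have hpow : 2 ^ (k + 1) = 2 ^ k + 2 ^ k := by rw [pow_succ]; ring
    have h1 : y ∈ G.aset x ((r + 2 ^ k) + 2 ^ k) := by
      rwa [show (r + 2 ^ k) + 2 ^ k = r + 2 ^ (k + 1) by omega]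
    have h1n : y ∉ G.aset x ((r + 2 ^ k) + 2 ^ k - 2) := by
      rwa [show (r + 2 ^ k) + 2 ^ k - 2 = r + 2 ^ (k + 1) - 2 by omega]
    obtain ⟨w, ⟨hw, hwn⟩, hyw⟩ := ih (r + 2 ^ k) (hr.trans (Nat.le_add_right _ _)) y h1 h1n
    obtain ⟨p, ⟨hp, hpn⟩, hwp⟩ := ih r hr w hw hwn
    rcases G.mem_ladder hinv x hwp hyw with rfl | hyp
    · exfalso
      apply hyn
      have hpos : 1 ≤ 2 ^ k := Nat.one_le_two_pow
      have hidx : r + 2 ^ (k + 1) - 2 = r + 2 * (2 ^ k - 1) := by omega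
      rw [hidx]
      exact G.aset_monoEven hinv x r (2 ^ k - 1) hp
    · exact ⟨p, ⟨hp, hpn⟩, hyp⟩

/-- cardinality of the "frontier". -/
noncomputable def tcard (x : X) (r : ℕ) : ℕ := ((G.aset x r) \ (G.aset x (r - 2))).card

lemma tcard_le (hinv : ∀ a : X, G.inv a = a) (x : X) (k : ℕ) (hk : 1 ≤ k)
    (r : ℕ) (hr : 1 ≤ r) :
    G.tcard x (r + 2 ^ k) ≤ 2 * G.tcard x r := by
  have hsub : (G.aset x (r + 2 ^ k)) \ (G.aset x (r + 2 ^ k - 2)) ⊆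
      ((G.aset x r) \ (G.aset x (r - 2))).biUnion
        (fun w => (G.mul w (G.uchain x k)).toFinset) := by
    intro y hy
    rw [Finset.mem_sdiff] at hy
    obtain ⟨w, ⟨hw, hwn⟩, hyw⟩ := G.inc hinv x k hk r hr y hy.1 hy.2
    exact Finset.mem_biUnion.mpr ⟨w, Finset.mem_sdiff.mpr ⟨hw, hwn⟩,
      Multiset.mem_toFinset.mpr hyw⟩
  calc G.tcard x (r + 2 ^ k) ≤ (((G.aset x r) \ (G.aset x (r - 2))).biUnion
        (fun w => (G.mul w (G.uchain x k)).toFinset)).card := Finset.card_le_card hsub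
    _ ≤ ((G.aset x r) \ (G.aset x (r - 2))).card * 2 := by
        apply Finset.card_biUnion_le_card_mul
        intro a _
        calc (G.mul a (G.uchain x k)).toFinset.card
            ≤ Multiset.card (G.mul a (G.uchain x k)) := Multiset.toFinset_card_le _
          _ = 2 := G.card_mul _ _
    _ = 2 * G.tcard x r := by rw [tcard]; ring


lemma tcard_bound (hinv : ∀ a : X, G.inv a = a) (x : X) :
    ∀ r, 1 ≤ r → G.tcard x r ≤ r := by
  intro r
  induction r using Nat.strong_induction_on with
  | _ r ih =>
    intro hr
    rcases Nat.lt_or_ge r 3 with hr3 | hr3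
    · interval_cases r
      · have h0 : G.tcard x 1 ≤ (G.aset x 1).card := Finset.card_le_card Finset.sdiff_subset
        have h1 : (G.aset x 1).card ≤ 1 := by
          have h2 : (G.aset x 1).card ≤ Multiset.card (G.spow x 0) :=
            Multiset.toFinset_card_le _
          simpa [spow] using h2
        omega
      · have h0 : G.tcard x 2 ≤ (G.aset x 2).card := Finset.card_le_card Finset.sdiff_subset
        have h1 : (G.aset x 2).card ≤ 2 := by
          have h2 : (G.aset x 2).card ≤ Multiset.card (G.spow x 1) :=
            Multiset.toFinset_card_le _
          rwa [G.spow_one_card] at h2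
        omega
    · set k := Nat.log 2 (r - 1) with hkdef
      have hrne : r - 1 ≠ 0 := by omega
      have h1 : 2 ^ k ≤ r - 1 := Nat.pow_log_le_self 2 hrne
      have h2 : r - 1 < 2 ^ (k + 1) := Nat.lt_pow_succ_log_self (by norm_num) _
      have hk1 : 1 ≤ k := by
        have h3 : 2 ^ 1 ≤ r - 1 := by omega
        exact (Nat.le_log_iff_pow_le (by norm_num) hrne).mpr h3
      have hpow : 2 ^ (k + 1) = 2 ^ k + 2 ^ k := by rw [pow_succ]; ring
      set j := r - 2 ^ k with hjdef
      have hpos : 1 ≤ 2 ^ k := Nat.one_le_two_pow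
      have hj1 : 1 ≤ j := by omega
      have hjr : j < r := by omega
      have hrj : r = j + 2 ^ k := by omega
      have hle : G.tcard x r ≤ 2 * G.tcard x j := by
        rw [hrj]; exact G.tcard_le hinv x k hk1 j hj1
      have hje : G.tcard x j ≤ j := ih j hjr hj1
      omega

lemma aset_card_bound (hinv : ∀ a : X, G.inv a = a) (x : X) :
    ∀ r, 1 ≤ r → (G.aset x r).card ≤ r * (r + 1) := by
  intro r
  induction r using Nat.strong_induction_on with
  | _ r ih =>
    intro hr
    rcases Nat.lt_or_ge r 3 with hr3 | hr3
    · interval_cases r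
      · have h1 : (G.aset x 1).card ≤ 1 := by
          have h2 : (G.aset x 1).card ≤ Multiset.card (G.spow x 0) :=
            Multiset.toFinset_card_le _
          simpa [spow] using h2
        omega
      · have h1 : (G.aset x 2).card ≤ 2 := by
          have h2 : (G.aset x 2).card ≤ Multiset.card (G.spow x 1) :=
            Multiset.toFinset_card_le _
          rwa [G.spow_one_card] at h2
        omega
    · have hsplit : (G.aset x r).card ≤ G.tcard x r + (G.aset x (r - 2)).card :=
        Finset.card_le_card_sdiff_add_card
      have ht : G.tcard x r ≤ r := G.tcard_bound hinv x r hr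
      have ha : (G.aset x (r - 2)).card ≤ (r - 2) * (r - 2 + 1) :=
        ih (r - 2) (by omega) (by omega)
      have hmul : (r - 2) * (r - 2 + 1) + r ≤ r * (r + 1) := by
        obtain ⟨m, rfl⟩ : ∃ m, r = m + 3 := ⟨r - 3, by omega⟩
        have h : m + 3 - 2 = m + 1 := by omega
        rw [h]
        nlinarith
      omega

end Aux

end NValuedGroup

/-- In a 2-valued group with `inv = id`, the growth function of the dynamic `T_x` at `x`
satisfies `ξ_x(r) = |Set(x^{*r})| ≤ r·(r+1)`; recall `x^{*r} = G.spow x (r-1)`. -/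
theorem two_valued_dynamic_growth (G : NValuedGroup 2 X) (hinv : ∀ a : X, G.inv a = a)
    (x : X) : ∀ r : ℕ, 1 ≤ r →
      Nat.card ({y | y ∈ G.spow x (r - 1)} : Set X) ≤ r * (r + 1) := by
  intro r hr
  letI := Classical.decEq X
  obtain ⟨m, rfl⟩ : ∃ m, r = m + 1 := ⟨r - 1, by omega⟩
  have hset : ({y | y ∈ G.spow x (m + 1 - 1)} : Set X) =
      (((G.spow x m).toFinset : Finset X) : Set X) := by
    ext y
    simp
  rw [hset, Nat.card_coe_set_eq, Set.ncard_coe_finset]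
  have h := G.aset_card_bound hinv x (m + 1) (by omega)
  simpa [NValuedGroup.aset] using h
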